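/- Dimension count for the 2D C^r element family: let d = 2, r_2 ≥ 2 r_1 ≥ 0, k ≥ 2 r_2 + 1. Then the number of degrees of freedom satisfies binomial(k+2,2) = 3·binomial(r_2+2,2) + 3·[(k − 2r_2 − 1)(r_1+1) + binomial(r_1+1,2)] + |Σ_0(2,k)|, where Σ_0(2,k) = {(α_0,α_1,α_2) ∈ ℕ^3 : α_0+α_1+α_2 = k, each α_i ≥ r_1+1, and each pairwise sum α_i+α_j ≥ r_2+1}; in particular |Σ_0(2,k)| = binomial(k+2,2) − 3·binomial(r_2+2,2) − 3·[(k−2r_2−1)(r_1+1) + binomial(r_1+1,2)]. -/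

import Mathlib

/-- The interior multi-index set `Σ_0(2,k)` of the 2D family: triples summing to `k` with
every entry `≥ r₁ + 1` and every pairwise sum `≥ r₂ + 1`. -/
def interiorSet (k r₁ r₂ : ℕ) : Set (Fin 3 → ℕ) :=
  {α | α 0 + α 1 + α 2 = k ∧ (∀ i, r₁ + 1 ≤ α i) ∧
    (∀ i j : Fin 3, i ≠ j → r₂ + 1 ≤ α i + α j)}

/-- Twice a triangular number. -/
lemma two_mul_choose_two (n : ℕ) : 2 * (n + 1).choose 2 = (n + 1) * n := by
  rw [Nat.choose_two_right]
  simp only [Nat.add_sub_cancel]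
  have h : 2 ∣ (n + 1) * n := by
    rw [mul_comm]; exact (Nat.even_mul_succ_self n).two_dvd
  rw [Nat.mul_div_cancel' h]

/-- Gauss sum over `Icc l (l + c)`. -/
lemma gauss' (l c : ℕ) : 2 * ∑ a ∈ Finset.Icc l (l + c), a = (2 * l + c) * (c + 1) := by
  induction c with
  | zero => simp [Finset.Icc_self]
  | succ n ih =>
      rw [show l + (n + 1) = (l + n) + 1 by ring, Finset.sum_Icc_succ_top (by omega)]
      zify at ih ⊢
      linear_combination ih

/-- Gauss sum over a general `Icc`. -/
lemma gauss (l u : ℕ) : 2 * ∑ a ∈ Finset.Icc l u, a = (l + u) * (u + 1 - l) := by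
  rcases le_or_gt l u with h | h
  · obtain ⟨c, rfl⟩ : ∃ c, u = l + c := ⟨u - l, by omega⟩
    rw [gauss']
    congr 1 <;> omega
  · rw [Finset.Icc_eq_empty (by omega), show u + 1 - l = 0 by omega]
    simp

/-- The index Finset parametrizing the interior set by its first two coordinates. -/
def idxFinset (r₁ s m : ℕ) : Finset ((_ : ℕ) × ℕ) :=
  (Finset.Icc (r₁ + 1) (2 * r₁ + s + m)).sigma
    (fun a => Finset.Icc (max (r₁ + 1) (2 * r₁ + s + 1 - a))
      (min (2 * r₁ + s + m) (3 * r₁ + 2 * s + m - a)))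

/-- Reconstruct a triple from its first two coordinates. -/
def toTriple (r₁ s m : ℕ) (p : (_ : ℕ) × ℕ) : Fin 3 → ℕ :=
  ![p.1, p.2, 4 * r₁ + 2 * s + m + 1 - p.1 - p.2]

lemma toTriple_injective (r₁ s m : ℕ) : Function.Injective (toTriple r₁ s m) := by
  rintro ⟨a, b⟩ ⟨c, d⟩ h
  have h0 := congrFun h 0
  have h1 := congrFun h 1
  simp [toTriple] at h0 h1
  subst h0; subst h1; rfl

lemma interior_eq_image (r₁ s m : ℕ) :
    interiorSet (4 * r₁ + 2 * s + m + 1) r₁ (2 * r₁ + s)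
      = toTriple r₁ s m '' ↑(idxFinset r₁ s m) := by
  ext α
  constructor
  · rintro ⟨hsum, hlo, hpair⟩
    have l0 := hlo 0; have l1 := hlo 1; have l2 := hlo 2
    have p01 := hpair 0 1 (by decide)
    have p02 := hpair 0 2 (by decide)
    have p12 := hpair 1 2 (by decide)
    refine ⟨⟨α 0, α 1⟩, ?_, ?_⟩
    · simp only [idxFinset, Finset.coe_sigma, Set.mem_sigma_iff, Finset.mem_coe,
        Finset.mem_Icc, max_le_iff, le_min_iff]
      omega
    · funext i
      fin_cases i <;> simp [toTriple] <;> omega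
  · rintro ⟨⟨a, b⟩, hp, rfl⟩
    simp only [idxFinset, Finset.coe_sigma, Set.mem_sigma_iff, Finset.mem_coe,
      Finset.mem_Icc, max_le_iff, le_min_iff] at hp
    refine ⟨by simp [toTriple]; omega, ?_, ?_⟩
    · intro i; fin_cases i <;> simp [toTriple] <;> omega
    · intro i j hij
      fin_cases i <;> fin_cases j <;> simp_all [toTriple] <;> omega

/-- The key cardinality computation for the interior set. -/
lemma card_interior (r₁ s m : ℕ) :
    2 * Nat.card (interiorSet (4 * r₁ + 2 * s + m + 1) r₁ (2 * r₁ + s))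
        + (3 * r₁ + 2 * s + m + 1) * (r₁ + m)
      = 2 * (m * s) + (2 * r₁ + s + 1) * s + 2 * ((2 * r₁ + 2 * s + m) * (r₁ + m)) := by
  have hN : Nat.card (interiorSet (4 * r₁ + 2 * s + m + 1) r₁ (2 * r₁ + s))
      = (idxFinset r₁ s m).card := by
    rw [interior_eq_image, Nat.card_coe_set_eq,
      Set.ncard_image_of_injective _ (toTriple_injective r₁ s m), Set.ncard_coe_finset]
  rw [hN, idxFinset, Finset.card_sigma]
  set f : ℕ → ℕ := fun a => (Finset.Icc (max (r₁ + 1) (2 * r₁ + s + 1 - a))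
      (min (2 * r₁ + s + m) (3 * r₁ + 2 * s + m - a))).card with hf
  have hsplit : ∑ a ∈ Finset.Icc (r₁ + 1) (2 * r₁ + s + m), f a
      = ∑ a ∈ Finset.Icc (r₁ + 1) (r₁ + s), f a
        + ∑ a ∈ Finset.Icc (r₁ + s + 1) (2 * r₁ + s + m), f a := by
    rw [
      Finset.Icc_add_one_left_eq_Ioc, Finset.Icc_add_one_left_eq_Ioc, Finset.Icc_add_one_left_eq_Ioc,
      Finset.sum_Ioc_consecutive _ (by omega) (by omega)]
  rw [hsplit]
  have h1 : ∑ a ∈ Finset.Icc (r₁ + 1) (r₁ + s), f a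
      = ∑ a ∈ Finset.Icc (r₁ + 1) (r₁ + s), (m + a) := by
    refine Finset.sum_congr rfl (fun a ha => ?_)
    rw [Finset.mem_Icc] at ha
    rw [hf]; simp only [Nat.card_Icc]; omega
  have h2 : ∑ a ∈ Finset.Icc (r₁ + s + 1) (2 * r₁ + s + m), f a
      = ∑ a ∈ Finset.Icc (r₁ + s + 1) (2 * r₁ + s + m), (2 * r₁ + 2 * s + m - a) := by
    refine Finset.sum_congr rfl (fun a ha => ?_)
    rw [Finset.mem_Icc] at ha
    rw [hf]; simp only [Nat.card_Icc]; omega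
  rw [h1, h2]
  have e1 : 2 * ∑ a ∈ Finset.Icc (r₁ + 1) (r₁ + s), a = (2 * r₁ + s + 1) * s := by
    rw [gauss]; congr 1 <;> omega
  have e2 : ∑ a ∈ Finset.Icc (r₁ + 1) (r₁ + s), (m + a)
      = (Finset.Icc (r₁ + 1) (r₁ + s)).card * m + ∑ a ∈ Finset.Icc (r₁ + 1) (r₁ + s), a := by
    rw [Finset.sum_add_distrib, Finset.sum_const, smul_eq_mul]
  have e3 : ∑ a ∈ Finset.Icc (r₁ + s + 1) (2 * r₁ + s + m), (2 * r₁ + 2 * s + m - a)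
        + ∑ a ∈ Finset.Icc (r₁ + s + 1) (2 * r₁ + s + m), a
      = (Finset.Icc (r₁ + s + 1) (2 * r₁ + s + m)).card * (2 * r₁ + 2 * s + m) := by
    rw [← Finset.sum_add_distrib]
    rw [Finset.sum_congr rfl (fun a ha => ?_), Finset.sum_const, smul_eq_mul]
    rw [Finset.mem_Icc] at ha
    omega
  have e4 : 2 * ∑ a ∈ Finset.Icc (r₁ + s + 1) (2 * r₁ + s + m), a
      = (3 * r₁ + 2 * s + m + 1) * (r₁ + m) := by
    rw [gauss]; congr 1 <;> omega
  have c1 : (Finset.Icc (r₁ + 1) (r₁ + s)).card = s := by rw [Nat.card_Icc]; omega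
  have c2 : (Finset.Icc (r₁ + s + 1) (2 * r₁ + s + m)).card = r₁ + m := by
    rw [Nat.card_Icc]; omega
  rw [e2, c1] at *
  rw [c2] at e3
  -- now a linear identity in the remaining atoms
  zify at e1 e3 e4 ⊢
  linear_combination e1 + 2 * e3 - e4

/-- Dimension count for the 2D `C^r` element family: with `r₂ ≥ 2r₁` and `k ≥ 2r₂ + 1`,
`binomial(k+2,2) = 3·binomial(r₂+2,2) + 3·[(k − 2r₂ − 1)(r₁+1) + binomial(r₁+1,2)] + |Σ_0(2,k)|`;
in particular `|Σ_0(2,k)|` equals the difference. -/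
theorem dimension_count_2d (k r₁ r₂ : ℕ) (h₁ : 2 * r₁ ≤ r₂) (h₂ : 2 * r₂ + 1 ≤ k) :
    (k + 2).choose 2 =
      3 * (r₂ + 2).choose 2
        + 3 * ((k - 2 * r₂ - 1) * (r₁ + 1) + (r₁ + 1).choose 2)
        + Nat.card (interiorSet k r₁ r₂) ∧
    Nat.card (interiorSet k r₁ r₂) =
      (k + 2).choose 2 - 3 * (r₂ + 2).choose 2
        - 3 * ((k - 2 * r₂ - 1) * (r₁ + 1) + (r₁ + 1).choose 2) := by
  obtain ⟨s, rfl⟩ : ∃ s, r₂ = 2 * r₁ + s := ⟨r₂ - 2 * r₁, by omega⟩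
  obtain ⟨m, rfl⟩ : ∃ m, k = 4 * r₁ + 2 * s + m + 1 := ⟨k - (4 * r₁ + 2 * s + 1), by omega⟩
  have hm : 4 * r₁ + 2 * s + m + 1 - 2 * (2 * r₁ + s) - 1 = m := by omega
  rw [hm]
  have hA : (2 : ℤ) * ((4 * r₁ + 2 * s + m + 1 + 2).choose 2 : ℕ)
      = (4 * r₁ + 2 * s + m + 3) * (4 * r₁ + 2 * s + m + 2) := by
    exact_mod_cast two_mul_choose_two (4 * r₁ + 2 * s + m + 2)
  have hB : (2 : ℤ) * ((2 * r₁ + s + 2).choose 2 : ℕ)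
      = (2 * r₁ + s + 2) * (2 * r₁ + s + 1) := by
    exact_mod_cast two_mul_choose_two (2 * r₁ + s + 1)
  have hC : (2 : ℤ) * ((r₁ + 1).choose 2 : ℕ) = (r₁ + 1) * r₁ := by
    exact_mod_cast two_mul_choose_two r₁
  have hc : (2 : ℤ) * (Nat.card (interiorSet (4 * r₁ + 2 * s + m + 1) r₁ (2 * r₁ + s)) : ℕ)
        + (3 * r₁ + 2 * s + m + 1) * (r₁ + m)
      = 2 * (m * s) + (2 * r₁ + s + 1) * s + 2 * ((2 * r₁ + 2 * s + m) * (r₁ + m)) := by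
    exact_mod_cast card_interior r₁ s m
  have key : ((4 * r₁ + 2 * s + m + 1 + 2).choose 2 : ℤ)
      = 3 * ((2 * r₁ + s + 2).choose 2 : ℕ)
        + 3 * ((m : ℤ) * (r₁ + 1) + ((r₁ + 1).choose 2 : ℕ))
        + (Nat.card (interiorSet (4 * r₁ + 2 * s + m + 1) r₁ (2 * r₁ + s)) : ℕ) := by
    have key2 : (2:ℤ) * ((4 * r₁ + 2 * s + m + 1 + 2).choose 2 : ℕ)
        = 2 * (3 * ((2 * r₁ + s + 2).choose 2 : ℕ)
          + 3 * ((m : ℤ) * (r₁ + 1) + ((r₁ + 1).choose 2 : ℕ))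
          + (Nat.card (interiorSet (4 * r₁ + 2 * s + m + 1) r₁ (2 * r₁ + s)) : ℕ)) := by
      linear_combination hA - 3 * hB - 3 * hC - hc
    linarith [key2]
  have main : (4 * r₁ + 2 * s + m + 1 + 2).choose 2
      = 3 * (2 * r₁ + s + 2).choose 2
        + 3 * (m * (r₁ + 1) + (r₁ + 1).choose 2)
        + Nat.card (interiorSet (4 * r₁ + 2 * s + m + 1) r₁ (2 * r₁ + s)) := by
    exact_mod_cast key
  refine ⟨main, ?_⟩
  rw [main]
  exact (fun a b c : ℕ => show c = a + b + c - a - b by omega) _ _ _
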